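/- arXiv:2503.19343 — 3 statements merged into one kernel-verified Lean document; each statement's English description precedes it below -/
import Mathlib

section
/- Let f, g : ℝ → ℝ be continuously differentiable, 2π-periodic, and linearly independent as elements of the space of functions. Then there exist real numbers λ, μ, not both zero, and a point x ∈ ℝ, such that the derivative of λf + μg vanishes both at x and at x + π. -/
open Real

theorem stmt_1 (f g : ℝ → ℝ)
    (hf : ContDiff ℝ 1 f) (hg : ContDiff ℝ 1 g)
    (hpf : Function.Periodic f (2 * π)) (hpg : Function.Periodic g (2 * π))
    (hli : LinearIndependent ℝ ![f, g]) :
    ∃ lam mu : ℝ, ¬(lam = 0 ∧ mu = 0) ∧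
      ∃ x : ℝ, deriv (fun t => lam * f t + mu * g t) x = 0 ∧
        deriv (fun t => lam * f t + mu * g t) (x + π) = 0 := by
  set F := deriv f with hFdef
  set G := deriv g with hGdef
  have hFd : Differentiable ℝ f := hf.differentiable one_ne_zero
  have hGd : Differentiable ℝ g := hg.differentiable one_ne_zero
  have hFc : Continuous F := hf.continuous_deriv le_rfl
  have hGc : Continuous G := hg.continuous_deriv le_rfl
  have hpF : ∀ y, F (y + 2 * π) = F y := by
    intro y
    have he : (fun t => f (t + 2 * π)) = f := funext hpf
    rw [hFdef, ← deriv_comp_add_const f (2 * π) y, he]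
  have hpG : ∀ y, G (y + 2 * π) = G y := by
    intro y
    have he : (fun t => g (t + 2 * π)) = g := funext hpg
    rw [hGdef, ← deriv_comp_add_const g (2 * π) y, he]
  set D : ℝ → ℝ := fun x => F x * G (x + π) - G x * F (x + π) with hDdef
  have hDc : Continuous D := by
    apply Continuous.sub
    · exact hFc.mul (hGc.comp (continuous_id.add continuous_const))
    · exact hGc.mul (hFc.comp (continuous_id.add continuous_const))
  have hFP : F (π + π) = F 0 := by
    rw [show π + π = 0 + 2 * π by ring]; exact hpF 0
  have hGP : G (π + π) = G 0 := by
    rw [show π + π = 0 + 2 * π by ring]; exact hpG 0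
  have hanti : D π = -D 0 := by
    simp only [hDdef, hFP, hGP, zero_add]
    ring
  have h0 : (0 : ℝ) ∈ Set.uIcc (D 0) (D π) := by
    rw [hanti, Set.mem_uIcc]
    rcases le_total (D 0) 0 with h | h
    · exact Or.inl ⟨h, by linarith⟩
    · exact Or.inr ⟨by linarith, h⟩
  obtain ⟨x, hxmem, hDx⟩ := intermediate_value_uIcc (hDc.continuousOn) h0
  have hDx : F x * G (x + π) - G x * F (x + π) = 0 := hDx
  have key : ∀ (lam mu : ℝ) (y : ℝ),
      deriv (fun t => lam * f t + mu * g t) y = lam * F y + mu * G y := by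
    intro lam mu y
    exact (((hFd y).hasDerivAt.const_mul lam).add
      ((hGd y).hasDerivAt.const_mul mu)).deriv
  by_cases h1 : F x = 0 ∧ G x = 0
  · by_cases h2 : F (x + π) = 0 ∧ G (x + π) = 0
    · exact ⟨1, 0, by simp, x, by rw [key]; rw [h1.1]; ring,
        by rw [key]; rw [h2.1]; ring⟩
    · refine ⟨-G (x + π), F (x + π), ?_, x, ?_, ?_⟩
      · rintro ⟨ha, hb⟩; exact h2 ⟨hb, by simpa using ha⟩
      · rw [key, h1.1, h1.2]; ring
      · rw [key]; ring
  · refine ⟨-G x, F x, ?_, x, ?_, ?_⟩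
    · rintro ⟨ha, hb⟩; exact h1 ⟨hb, by simpa using ha⟩
    · rw [key]; ring
    · rw [key]; linear_combination hDx
end

section
/- Let P = (p₁₂, p₁₃, p₁₄, p₂₃, p₂₄, p₃₄) and Q = (q₁₂, q₁₃, q₁₄, q₂₃, q₂₄, q₃₄) be points of ℝ⁶ both satisfying the equations x₁₃ = 0, x₁₄² + x₂₃x₃₄ = 0, x₁₂x₃₄ + x₁₄x₂₃ = 0, x₂₃² − x₁₄x₁₂ = 0. If p₁₂ = q₁₂, p₂₄ = q₂₄, and p₃₄ = q₃₄, then P = Q. -/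
theorem stmt_8 (p12 p13 p14 p23 p24 p34 q12 q13 q14 q23 q24 q34 : ℝ)
    (hp1 : p13 = 0) (hp2 : p14 ^ 2 + p23 * p34 = 0)
    (hp3 : p12 * p34 + p14 * p23 = 0) (hp4 : p23 ^ 2 - p14 * p12 = 0)
    (hq1 : q13 = 0) (hq2 : q14 ^ 2 + q23 * q34 = 0)
    (hq3 : q12 * q34 + q14 * q23 = 0) (hq4 : q23 ^ 2 - q14 * q12 = 0)
    (e12 : p12 = q12) (e24 : p24 = q24) (e34 : p34 = q34) :
    p12 = q12 ∧ p13 = q13 ∧ p14 = q14 ∧ p23 = q23 ∧ p24 = q24 ∧ p34 = q34 := by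
  subst e12 e34 hp1 hq1
  have hc1 : p14 ^ 3 = p12 * p34 ^ 2 := by linear_combination p14 * hp2 - p34 * hp3
  have hc2 : q14 ^ 3 = p12 * p34 ^ 2 := by linear_combination q14 * hq2 - p34 * hq3
  have h14 : p14 = q14 :=
    (Odd.strictMono_pow (R := ℝ) (by decide : Odd 3)).injective (hc1.trans hc2.symm)
  subst h14
  have h23 : p23 = q23 := by
    rcases eq_or_ne p34 0 with h | h
    · subst h
      have h0 : p14 = 0 := by nlinarith [sq_nonneg p14]
      subst h0
      have : p23 ^ 2 = 0 := by linarith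
      have : q23 ^ 2 = 0 := by linarith
      nlinarith [sq_nonneg (p23 - q23), sq_nonneg (p23 + q23)]
    · have : p23 * p34 = q23 * p34 := by nlinarith
      exact mul_right_cancel₀ h this
  exact ⟨rfl, rfl, rfl, h23, e24, rfl⟩
end

section
/- Let a, b, A, α, β ∈ ℝ and let f(φ) = a·cos φ + b·sin φ be not identically zero (i.e. (a,b) ≠ (0,0)). If f(A) = f(A+π), f'(A) = α·f'(A+π), and f''(A) = β·f'(A+π) + α²·f''(A+π), then α = −1 and β = 0. -/
open Real

theorem stmt_13 (a b A α β : ℝ) (hab : ¬(a = 0 ∧ b = 0)) :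
    let f : ℝ → ℝ := fun φ => a * cos φ + b * sin φ
    f A = f (A + π) →
    deriv f A = α * deriv f (A + π) →
    deriv (deriv f) A = β * deriv f (A + π) + α ^ 2 * deriv (deriv f) (A + π) →
    α = -1 ∧ β = 0 := by
  intro f h0 h1 h2
  have hd : ∀ x : ℝ, HasDerivAt f (b * cos x - a * sin x) x := by
    intro x
    have h := ((Real.hasDerivAt_cos x).const_mul a).add ((Real.hasDerivAt_sin x).const_mul b)
    exact h.congr_deriv (by ring)
  have hdf : deriv f = fun x => b * cos x - a * sin x := funext fun x => (hd x).deriv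
  have hdd : deriv (deriv f) = fun x => -(a * cos x) - b * sin x := by
    rw [hdf]
    funext x
    have h := ((Real.hasDerivAt_cos x).const_mul b).sub ((Real.hasDerivAt_sin x).const_mul a)
    have h2 : HasDerivAt (fun x => b * cos x - a * sin x) (-(a * cos x) - b * sin x) x := by
      exact h.congr_deriv (by ring)
    exact h2.deriv
  rw [hdd] at h2
  simp only [hdf, f, Real.cos_add_pi, Real.sin_add_pi] at h0 h1 h2
  have pyth := Real.sin_sq_add_cos_sq A
  have hfz : a * cos A + b * sin A = 0 := by linarith
  have hc : b * cos A - a * sin A ≠ 0 := by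
    intro hcz
    apply hab
    constructor
    · linear_combination cos A * hfz - sin A * hcz - a * pyth
    · linear_combination sin A * hfz + cos A * hcz - b * pyth
  have hβ : β = 0 := by
    have : β * (b * cos A - a * sin A) = 0 := by nlinarith [h2]
    rcases mul_eq_zero.mp this with h | h
    · exact h
    · exact absurd h hc
  have hα : α = -1 := by
    have : (1 + α) * (b * cos A - a * sin A) = 0 := by nlinarith [h1]
    rcases mul_eq_zero.mp this with h | h
    · linarith
    · exact absurd h hc
  exact ⟨hα, hβ⟩
end
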